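/- Theorem 4.1, level-set equality (equation (4.8)): Let Ω = {ω_1, …, ω_n} with Σ_{j=1}^{n} p̄(ω_j) ≥ 1, let f be a gamble such that f(ω_1) ≥ f(ω_2) ≥ ⋯ ≥ f(ω_n) (the enumeration lists outcomes by descending level sets of f), let k be the smallest index such that Σ_{j=1}^{k} p̄(ω_j) ≥ 1, and define p by p(ω_i) = p̄(ω_i) if i < k, p(ω_k) = 1 − Σ_{j=1}^{k−1} p̄(ω_j), and p(ω_i) = 0 if i > k. Then for every nonempty upper level set A = { ω ∈ Ω : f(ω) ≥ c } of f, one has min{ Σ_{ω ∈ A} p̄(ω), 1 } = Σ_{ω ∈ A} p(ω). -/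

import Mathlib

/-- Theorem 4.1, level-set equality (eq. (4.8)): for the probability mass
function `p` constructed by Algorithm 1, every nonempty upper level set `A`
of `f` satisfies `min {∑_{ω ∈ A} pbar ω, 1} = ∑_{ω ∈ A} p ω`. -/
theorem algorithm_p_level_set_equality
    {Ω : Type*} [Fintype Ω] [DecidableEq Ω]
    (n : ℕ) (e : Fin n ≃ Ω)
    (pbar : Ω → ℝ) (hpbar : ∀ ω, 0 ≤ pbar ω ∧ pbar ω ≤ 1)
    (hasl : 1 ≤ ∑ ω : Ω, pbar ω)
    (f : Ω → ℝ)
    (hmono : ∀ i j : Fin n, i ≤ j → f (e j) ≤ f (e i))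
    (k : Fin n)
    (hk : 1 ≤ ∑ j ∈ Finset.Iic k, pbar (e j))
    (hkmin : ∀ j : Fin n, j < k → ∑ i ∈ Finset.Iic j, pbar (e i) < 1)
    (p : Ω → ℝ)
    (hpdef : ∀ i : Fin n, p (e i) =
      if i < k then pbar (e i)
      else if i = k then 1 - ∑ j ∈ Finset.Iio k, pbar (e j)
      else 0) :
    ∀ c : ℝ, (Finset.univ.filter (fun ω => c ≤ f ω)).Nonempty →
      min (∑ ω ∈ Finset.univ.filter (fun ω => c ≤ f ω), pbar ω) 1 =
        ∑ ω ∈ Finset.univ.filter (fun ω => c ≤ f ω), p ω := by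

  intro c hA
  classical
  -- transfer sums to Fin n
  have hsum : ∀ g : Ω → ℝ, ∑ ω ∈ Finset.univ.filter (fun ω => c ≤ f ω), g ω
      = ∑ i ∈ Finset.univ.filter (fun i : Fin n => c ≤ f (e i)), g (e i) := by
    intro g
    rw [Finset.sum_filter, Finset.sum_filter]
    exact (Equiv.sum_comp e (fun ω => if c ≤ f ω then g ω else 0)).symm
  set S : Finset (Fin n) := Finset.univ.filter (fun i : Fin n => c ≤ f (e i)) with hSdef
  have hSne : S.Nonempty := by
    obtain ⟨ω, hω⟩ := hA
    simp only [Finset.mem_filter, Finset.mem_univ, true_and] at hω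
    exact ⟨e.symm ω, by simp [hSdef, hω]⟩
  set m := S.max' hSne with hmdef
  have hmS : m ∈ S := S.max'_mem hSne
  have hmc : c ≤ f (e m) := by
    simpa [hSdef] using hmS
  have hSeq : S = Finset.Iic m := by
    ext i
    simp only [hSdef, Finset.mem_filter, Finset.mem_univ, true_and, Finset.mem_Iic]
    constructor
    · intro hi; exact S.le_max' i (by simp [hSdef, hi])
    · intro hi; exact le_trans hmc (hmono i m hi)
  rw [hsum pbar, hsum p, hSeq]
  rcases lt_or_ge m k with hcase | hcase
  · -- m < k : min is the sum itself, and p = pbar on Iic m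
    have hlt : ∑ i ∈ Finset.Iic m, pbar (e i) < 1 := hkmin m hcase
    rw [min_eq_left hlt.le]
    refine Finset.sum_congr rfl fun i hi => ?_
    rw [hpdef i, if_pos (lt_of_le_of_lt (Finset.mem_Iic.mp hi) hcase)]
  · -- k ≤ m : min is 1, and the p-sum telescopes to 1
    have hge : 1 ≤ ∑ i ∈ Finset.Iic m, pbar (e i) := by
      refine le_trans hk (Finset.sum_le_sum_of_subset_of_nonneg ?_ ?_)
      · exact Finset.Iic_subset_Iic.mpr hcase
      · intro i _ _; exact (hpbar (e i)).1
    rw [min_eq_right hge]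
    have h0 : ∑ i ∈ Finset.Iic m, p (e i) = ∑ i ∈ Finset.Iic k, p (e i) := by
      symm
      refine Finset.sum_subset (Finset.Iic_subset_Iic.mpr hcase) ?_
      intro i hi hik
      simp only [Finset.mem_Iic, not_le] at hik
      rw [hpdef i, if_neg (not_lt.mpr hik.le), if_neg (ne_of_gt hik)]
    rw [h0, ← Finset.Iio_insert, Finset.sum_insert (by simp)]
    rw [hpdef k, if_neg (lt_irrefl k), if_pos rfl]
    have h1 : ∑ i ∈ Finset.Iio k, p (e i) = ∑ i ∈ Finset.Iio k, pbar (e i) := by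
      refine Finset.sum_congr rfl fun i hi => ?_
      rw [hpdef i, if_pos (Finset.mem_Iio.mp hi)]
    rw [h1]; ring
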